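/- In ℚ(α,s), with δ = (α-α⁻¹)/(s-s⁻¹)+1, the eigenvalue c_∅ of the empty diagram equals δ, and for every nonempty Young diagram λ, c_λ ≠ δ; i.e. c_λ = δ if and only if λ = ∅. -/
import Mathlib


open scoped BigOperators

noncomputable abbrev Kf : Type := FractionRing (MvPolynomial (Fin 2) ℚ)

noncomputable def α : Kf := algebraMap (MvPolynomial (Fin 2) ℚ) Kf (MvPolynomial.X 0)
noncomputable def s : Kf := algebraMap (MvPolynomial (Fin 2) ℚ) Kf (MvPolynomial.X 1)
noncomputable def δ : Kf := (α - α⁻¹) / (s - s⁻¹) + 1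

/-- content of a cell -/
def cn (c : ℕ × ℕ) : ℤ := (c.2 : ℤ) - (c.1 : ℤ)

/-- the eigenvalue `c_λ` of the Hopf map for a Young diagram -/
noncomputable def cY (lam : YoungDiagram) : Kf :=
  δ + (s - s⁻¹) *
    (α * ∑ c ∈ lam.cells, s ^ (2 * cn c) - α⁻¹ * ∑ c ∈ lam.cells, s ^ (-(2 * cn c)))

open MvPolynomial

private lemma phi_inj :
    Function.Injective (algebraMap (MvPolynomial (Fin 2) ℚ) Kf) :=
  IsFractionRing.injective _ _

private lemma s_ne_zero : s ≠ 0 := by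
  rw [s, ← (algebraMap (MvPolynomial (Fin 2) ℚ) Kf).map_zero]
  exact fun h => X_ne_zero 1 (phi_inj h)

private lemma alpha_ne_zero : α ≠ 0 := by
  rw [α, ← (algebraMap (MvPolynomial (Fin 2) ℚ) Kf).map_zero]
  exact fun h => X_ne_zero 0 (phi_inj h)

private lemma s_sub_inv_ne_zero : s - s⁻¹ ≠ 0 := by
  intro h
  have hs := s_ne_zero
  have h1 : s * s = 1 := by
    have : s = s⁻¹ := sub_eq_zero.mp h
    field_simp at this
    linear_combination this
  have h2 : (X 1 * X 1 : MvPolynomial (Fin 2) ℚ) = 1 := by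
    apply phi_inj
    rw [map_mul, map_one]
    exact h1
  have := congrArg (MvPolynomial.eval (fun _ => (0 : ℚ))) h2
  simp at this

theorem cY_eq_delta_iff_empty :
    cY ⊥ = δ ∧ ∀ lam : YoungDiagram, cY lam = δ ↔ lam = ⊥ := by
  have hbot : cY (⊥ : YoungDiagram) = δ := by
    simp [cY, YoungDiagram.cells_bot]
  refine ⟨hbot, fun lam => ⟨fun h => ?_, fun h => h ▸ hbot⟩⟩
  by_contra hne
  -- the diagram is nonempty
  have hcells : lam.cells.Nonempty := by
    rcases Finset.eq_empty_or_nonempty lam.cells with he | hne'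
    · exact absurd (by ext c; simp [← YoungDiagram.mem_cells, he]) hne
    · exact hne'
  set A : Kf := ∑ c ∈ lam.cells, s ^ (2 * cn c) with hA
  set B : Kf := ∑ c ∈ lam.cells, s ^ (-(2 * cn c)) with hB
  have key : α * A - α⁻¹ * B = 0 := by
    have h0 : (s - s⁻¹) * (α * A - α⁻¹ * B) = 0 := by
      have := h
      rw [cY] at this
      linear_combination this
    exact (mul_eq_zero.mp h0).resolve_left s_sub_inv_ne_zero
  -- bound on contents
  set N : ℕ := 2 * (lam.rowLen 0 + lam.colLen 0) with hN
  have hbound : ∀ c ∈ lam.cells, (0 : ℤ) ≤ (N : ℤ) + 2 * cn c ∧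
      (0 : ℤ) ≤ (N : ℤ) - 2 * cn c := by
    intro c hc
    rw [YoungDiagram.mem_cells] at hc
    have hc' : (c.1, c.2) ∈ lam := by simpa using hc
    have h1 : c.2 < lam.rowLen c.1 := YoungDiagram.mem_iff_lt_rowLen.mp hc'
    have h2 : c.1 < lam.colLen c.2 := YoungDiagram.mem_iff_lt_colLen.mp hc'
    have h1' : c.2 < lam.rowLen 0 := lt_of_lt_of_le h1 (lam.rowLen_anti 0 c.1 (Nat.zero_le _))
    have h2' : c.1 < lam.colLen 0 := lt_of_lt_of_le h2 (lam.colLen_anti 0 c.2 (Nat.zero_le _))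
    constructor <;> · rw [cn]; push_cast [hN]; omega
  set φ := algebraMap (MvPolynomial (Fin 2) ℚ) Kf with hφ
  set P : MvPolynomial (Fin 2) ℚ := ∑ c ∈ lam.cells, X 1 ^ ((N : ℤ) + 2 * cn c).toNat with hP
  set Q : MvPolynomial (Fin 2) ℚ := ∑ c ∈ lam.cells, X 1 ^ ((N : ℤ) - 2 * cn c).toNat with hQ
  have hsA : s ^ (N : ℤ) * A = φ P := by
    rw [hA, Finset.mul_sum, hP, map_sum]
    refine Finset.sum_congr rfl fun c hc => ?_
    rw [← zpow_add₀ s_ne_zero, map_pow, ← s]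
    rw [← zpow_natCast s, Int.toNat_of_nonneg (hbound c hc).1]
  have hsB : s ^ (N : ℤ) * B = φ Q := by
    rw [hB, Finset.mul_sum, hQ, map_sum]
    refine Finset.sum_congr rfl fun c hc => ?_
    rw [← zpow_add₀ s_ne_zero, map_pow, ← s]
    rw [← zpow_natCast s, Int.toNat_of_nonneg (hbound c hc).2, sub_eq_add_neg]
  -- from the vanishing, get a polynomial identity
  have hKf : φ (X 0 ^ 2 * P) = φ Q := by
    have hαA : α * A = α⁻¹ * B := by linear_combination key
    rw [map_mul, map_pow]
    have hα : (α : Kf) = φ (X 0) := rfl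
    rw [← hα, ← hsA, ← hsB]
    have : α ^ 2 * (s ^ (N : ℤ) * A) = α * (s ^ (N : ℤ) * (α * A)) := by ring
    rw [this, hαA]
    have h2 : α * (s ^ (N : ℤ) * (α⁻¹ * B)) = (α * α⁻¹) * (s ^ (N : ℤ) * B) := by ring
    rw [h2, mul_inv_cancel₀ alpha_ne_zero, one_mul]
  have hpoly : (X 0 ^ 2 * P : MvPolynomial (Fin 2) ℚ) = Q := phi_inj hKf
  -- evaluate at X0 = 0, X1 = 1
  have := congrArg (MvPolynomial.eval (fun i : Fin 2 => if i = 0 then (0 : ℚ) else 1)) hpoly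
  rw [map_mul, map_pow, eval_X, hP, hQ, map_sum, map_sum] at this
  simp only [eval_pow, eval_X] at this
  norm_num at this
  have hcard : lam.cells.card ≠ 0 := Finset.card_ne_zero_of_mem hcells.choose_spec
  exact hcard (by exact_mod_cast this.symm)
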